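/- Let A and B be associative rings with identity, f : A → B a ring homomorphism, and J a proper two-sided ideal of B. Assume J contains a regular central element of B. Then the amalgamation A⋈fJ is an Armendariz ring if and only if both A and the subring f(A)+J of B are Armendariz rings. -/

import Mathlib

open Polynomial

/-- A ring `R` is Armendariz if whenever `p * q = 0` for polynomials over `R`,
every product of a coefficient of `p` with a coefficient of `q` is zero. -/
def IsArmendariz (R : Type*) [Ring R] : Prop :=
  ∀ p q : R[X], p * q = 0 → ∀ i j : ℕ, p.coeff i * q.coeff j = 0

/-- A ring `R` is nil-Armendariz if whenever every coefficient of `p * q` is nilpotent,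
every product of a coefficient of `p` with a coefficient of `q` is nilpotent. -/
def IsNilArmendariz (R : Type*) [Ring R] : Prop :=
  ∀ p q : R[X], (∀ k : ℕ, IsNilpotent ((p * q).coeff k)) →
    ∀ i j : ℕ, IsNilpotent (p.coeff i * q.coeff j)

/-- A ring `R` is weak Armendariz if whenever `p * q = 0` for polynomials over `R`,
every product of a coefficient of `p` with a coefficient of `q` is nilpotent. -/
def IsWeakArmendariz (R : Type*) [Ring R] : Prop :=
  ∀ p q : R[X], p * q = 0 → ∀ i j : ℕ, IsNilpotent (p.coeff i * q.coeff j)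

/-- The amalgamation `A ⋈^f J = {(a, f a + j) | a ∈ A, j ∈ J}` of `A` and `B` along the
two-sided ideal `J` with respect to `f`, as a subring of `A × B`.  (A pair `(a, b)` has the
form `(a, f a + j)` with `j ∈ J` iff `b - f a ∈ J`.) -/
def amalgamation {A B : Type*} [Ring A] [Ring B] (f : A →+* B) (J : TwoSidedIdeal B) :
    Subring (A × B) where
  carrier := {p | p.2 - f p.1 ∈ J}
  zero_mem' := by simp [J.zero_mem]
  one_mem' := by simp [J.zero_mem]
  add_mem' := by
    intro x y hx hy
    have e : (x + y).2 - f ((x + y).1) = (x.2 - f x.1) + (y.2 - f y.1) := by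
      simp only [Prod.snd_add, Prod.fst_add, map_add]; abel
    show (x + y).2 - f ((x + y).1) ∈ J
    rw [e]; exact J.add_mem hx hy
  neg_mem' := by
    intro x hx
    have e : (-x).2 - f ((-x).1) = -(x.2 - f x.1) := by
      simp only [Prod.snd_neg, Prod.fst_neg, map_neg]; abel
    show (-x).2 - f ((-x).1) ∈ J
    rw [e]; exact J.neg_mem hx
  mul_mem' := by
    intro x y hx hy
    have e : (x * y).2 - f ((x * y).1) = x.2 * (y.2 - f y.1) + (x.2 - f x.1) * f y.1 := by
      simp only [Prod.snd_mul, Prod.fst_mul, map_mul, mul_sub, sub_mul]; abel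
    show (x * y).2 - f ((x * y).1) ∈ J
    rw [e]; exact J.add_mem (J.mul_mem_left _ _ hy) (J.mul_mem_right _ _ hx)

/-- The subring `f(A) + J = {f a + j | a ∈ A, j ∈ J}` of `B`.  (An element `b` has the form
`f a + j` with `j ∈ J` iff `b - f a ∈ J` for some `a`.) -/
def imageAddIdeal {A B : Type*} [Ring A] [Ring B] (f : A →+* B) (J : TwoSidedIdeal B) :
    Subring B where
  carrier := {b | ∃ a : A, b - f a ∈ J}
  zero_mem' := ⟨0, by simp [J.zero_mem]⟩
  one_mem' := ⟨1, by simp [J.zero_mem]⟩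
  add_mem' := by
    rintro x y ⟨a, ha⟩ ⟨b, hb⟩
    refine ⟨a + b, ?_⟩
    have e : x + y - f (a + b) = (x - f a) + (y - f b) := by
      rw [map_add]; abel
    rw [e]; exact J.add_mem ha hb
  neg_mem' := by
    rintro x ⟨a, ha⟩
    refine ⟨-a, ?_⟩
    have e : -x - f (-a) = -(x - f a) := by rw [map_neg]; abel
    rw [e]; exact J.neg_mem ha
  mul_mem' := by
    rintro x y ⟨a, ha⟩ ⟨b, hb⟩
    refine ⟨a * b, ?_⟩
    have e : x * y - f (a * b) = x * (y - f b) + (x - f a) * f b := by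
      rw [map_mul, mul_sub, sub_mul]; abel
    rw [e]; exact J.add_mem (J.mul_mem_left _ _ hb) (J.mul_mem_right _ _ ha)


private lemma central_mul_aux {B : Type*} [Ring B] {s : B} (hc : ∀ b : B, s * b = b * s)
    (a b : B) : (s * a) * (s * b) = s * (s * (a * b)) := by
  rw [mul_assoc, ← mul_assoc a s b, ← hc a, mul_assoc s a b]

theorem stmt_2 {A B : Type*} [Ring A] [Ring B] (f : A →+* B) (J : TwoSidedIdeal B)
    (hJ : (1 : B) ∉ J)
    (hs : ∃ s ∈ J, (∀ b : B, s * b = b * s) ∧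
      (∀ b : B, s * b = 0 → b = 0) ∧ (∀ b : B, b * s = 0 → b = 0)) :
    IsArmendariz (amalgamation f J) ↔ IsArmendariz A ∧ IsArmendariz (imageAddIdeal f J) := by
  obtain ⟨s, hsJ, hc, hl, hr⟩ := hs
  constructor
  · intro hR
    refine ⟨?_, ?_⟩
    · -- A is Armendariz
      have mem : ∀ a : A, ((a, f a) : A × B) ∈ amalgamation f J := by
        intro a; show f a - f a ∈ J; simpa using J.zero_mem
      let ι : A →+* amalgamation f J :=
        { toFun := fun a => ⟨(a, f a), mem a⟩
          map_one' := by apply Subtype.ext; simp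
          map_mul' := fun a b => by apply Subtype.ext; simp
          map_zero' := by apply Subtype.ext; simp
          map_add' := fun a b => by apply Subtype.ext; simp }
      intro p q hpq i j
      have h0 : (p.map ι) * (q.map ι) = 0 := by
        rw [← Polynomial.map_mul, hpq, Polynomial.map_zero]
      have h1 := hR _ _ h0 i j
      rw [Polynomial.coeff_map, Polynomial.coeff_map, ← map_mul] at h1
      have h2 := congrArg (fun x : amalgamation f J => (x : A × B).1) h1
      simpa [ι] using h2
    · -- f(A) + J is Armendariz
      intro p q hpq i j
      have memψ : ∀ b : imageAddIdeal f J, ((0, s * (b : B)) : A × B) ∈ amalgamation f J := by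
        intro b; show s * (b : B) - f 0 ∈ J
        simpa using J.mul_mem_right _ _ hsJ
      set ψ : imageAddIdeal f J → amalgamation f J := fun b => ⟨(0, s * (b : B)), memψ b⟩ with hψ
      have ψ0 : ψ 0 = 0 := by apply Subtype.ext; simp [hψ]
      set P : (amalgamation f J)[X] := ⟨AddMonoidAlgebra.ofCoeff (Finsupp.mapRange ψ ψ0 p.toFinsupp.coeff)⟩ with hP
      set Q : (amalgamation f J)[X] := ⟨AddMonoidAlgebra.ofCoeff (Finsupp.mapRange ψ ψ0 q.toFinsupp.coeff)⟩ with hQ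
      have coeffP : ∀ n, P.coeff n = ψ (p.coeff n) := fun n => rfl
      have coeffQ : ∀ n, Q.coeff n = ψ (q.coeff n) := fun n => rfl
      have valmul : ∀ m n : ℕ, ((P.coeff m * Q.coeff n : amalgamation f J) : A × B)
          = (0, s * (s * ((p.coeff m : B) * (q.coeff n : B)))) := by
        intro m n
        rw [coeffP, coeffQ]
        show ((0, s * (p.coeff m : B)) * (0, s * (q.coeff n : B)) : A × B) = _
        refine Prod.ext (by simp) ?_
        exact central_mul_aux hc _ _
      have hPQ : P * Q = 0 := by
        refine Polynomial.ext fun n => ?_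
        rw [Polynomial.coeff_mul, Polynomial.coeff_zero]
        apply Subtype.ext
        rw [AddSubmonoidClass.coe_finset_sum]
        have e1 : ∀ x ∈ Finset.HasAntidiagonal.antidiagonal n,
            ((P.coeff x.1 * Q.coeff x.2 : amalgamation f J) : A × B)
              = (0, s * (s * ((p.coeff x.1 : B) * (q.coeff x.2 : B)))) := fun x _ => valmul _ _
        rw [Finset.sum_congr rfl e1]
        have hsum : (∑ x ∈ Finset.HasAntidiagonal.antidiagonal n,
            ((0, s * (s * ((p.coeff x.1 : B) * (q.coeff x.2 : B)))) : A × B))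
            = (0, s * (s * (((p * q).coeff n : imageAddIdeal f J) : B))) := by
          refine Prod.ext ?_ ?_
          · simp [Prod.fst_sum]
          · rw [Prod.snd_sum, Polynomial.coeff_mul, AddSubmonoidClass.coe_finset_sum,
              Finset.mul_sum, Finset.mul_sum]
            simp
        rw [hsum, hpq]
        simp
      have h1 := hR P Q hPQ i j
      have h2 := Subtype.ext_iff.mp h1
      rw [valmul i j] at h2
      have h3 : (p.coeff i : B) * (q.coeff j : B) = 0 := by
        apply hl; apply hl
        simpa [Prod.ext_iff] using h2
      apply Subtype.ext
      simpa using h3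
  · rintro ⟨hA, hS⟩ p q hpq i j
    let π₁ : amalgamation f J →+* A := (RingHom.fst A B).comp (amalgamation f J).subtype
    let π₂ : amalgamation f J →+* imageAddIdeal f J :=
      RingHom.codRestrict ((RingHom.snd A B).comp (amalgamation f J).subtype)
        (imageAddIdeal f J) (fun x => ⟨(x : A × B).1, x.2⟩)
    have h1 := hA (p.map π₁) (q.map π₁)
      (by rw [← Polynomial.map_mul, hpq, Polynomial.map_zero]) i j
    have h2 := hS (p.map π₂) (q.map π₂)
      (by rw [← Polynomial.map_mul, hpq, Polynomial.map_zero]) i j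
    rw [Polynomial.coeff_map, Polynomial.coeff_map, ← map_mul] at h1 h2
    apply Subtype.ext
    refine Prod.ext ?_ ?_
    · exact h1
    · exact congrArg Subtype.val h2
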